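/- Let f be convex differentiable with L_f-Lipschitz gradient and g be convex. Then for any points x̃ and x^k and any L ≥ 0, the minimizer x⁺ of the composite model x ↦ ⟨∇f(x̃), x − x̃⟩ + (L_f/2)‖x − x̃‖₂² + g(x) + (L/2)‖x − x^k‖₂² satisfies f(x⁺) + g(x⁺) + (L/2)‖x⁺ − x^k‖₂² ≤ f(x) + g(x) + (L/2)‖x − x^k‖₂² + (L_f/2)‖x − x̃‖₂² for all x. -/

import Mathlib

open RealInnerProductSpace

variable {n : ℕ}
local notation "E" => EuclideanSpace ℝ (Fin n)

lemma line_hasDerivAt (f : E → ℝ) (hfd : Differentiable ℝ f) (a d : E) (t : ℝ) :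
    HasDerivAt (fun s : ℝ => f (a + s • d)) ⟪gradient f (a + t • d), d⟫ t := by
  have h1 : HasDerivAt (fun s : ℝ => a + s • d) d t := by
    simpa using ((hasDerivAt_id t).smul_const d).const_add a
  have h2 : HasFDerivAt f ((InnerProductSpace.toDual ℝ _) (gradient f (a + t • d))) (a + t • d) :=
    (hfd _).hasGradientAt
  have h3 := h2.comp_hasDerivAt t h1
  rw [InnerProductSpace.toDual_apply_apply] at h3
  exact h3

lemma grad_lower (f : E → ℝ) (hf : ConvexOn ℝ Set.univ f) (hfd : Differentiable ℝ f)
    (a b : E) : f a + ⟪gradient f a, b - a⟫ ≤ f b := by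
  set φ : ℝ → ℝ := fun s => f (a + s • (b - a)) with hφ
  have hconv : ConvexOn ℝ Set.univ φ := by
    have := hf.comp_affineMap (AffineMap.lineMap a b)
    have h' := this.subset (by simp) convex_univ
    have heq : (f ∘ ⇑(AffineMap.lineMap a b)) = φ := by
      funext s
      simp [hφ, AffineMap.lineMap_apply, add_comm]
    rwa [heq] at h'
  have hder : HasDerivAt φ ⟪gradient f a, b - a⟫ 0 := by
    simpa using line_hasDerivAt f hfd a (b - a) 0
  have := hconv.le_slope_of_hasDerivAt (Set.mem_univ (0:ℝ)) (Set.mem_univ 1) one_pos hder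
  have h0 : φ 0 = f a := by simp [hφ]
  have h1 : φ 1 = f b := by simp [hφ]
  rw [show slope φ 0 1 = φ 1 - φ 0 by rw [slope_def_field]; ring] at this
  rw [h0, h1] at this
  linarith

lemma descent_lemma (f : E → ℝ) (hfd : Differentiable ℝ f) (Lf : ℝ)
    (hfL : ∀ x y, ‖gradient f x - gradient f y‖ ≤ Lf * ‖x - y‖)
    (a b : E) : f b ≤ f a + ⟪gradient f a, b - a⟫ + Lf / 2 * ‖b - a‖ ^ 2 := by
  rcases eq_or_ne b a with h | h
  · simp [h]
  · have hLf : 0 ≤ Lf := by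
      have h1 := hfL b a
      have hb : 0 < ‖b - a‖ := by
        rw [norm_pos_iff]; exact sub_ne_zero.mpr h
      nlinarith [norm_nonneg (gradient f b - gradient f a)]
    set d := b - a with hd
    set φ : ℝ → ℝ := fun s => f (a + s • d) with hφ
    set φ' : ℝ → ℝ := fun s => ⟪gradient f (a + s • d), d⟫ with hφ'
    have hgc : Continuous (gradient f) := by
      refine (LipschitzWith.of_dist_le_mul (K := ⟨Lf, hLf⟩) ?_).continuous
      intro x y
      rw [dist_eq_norm, dist_eq_norm]; exact hfL x y
    have hcont : Continuous φ' := by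
      exact (hgc.comp (by continuity)).inner continuous_const
    have hder : ∀ t ∈ Set.uIcc (0:ℝ) 1, HasDerivAt φ (φ' t) t :=
      fun t _ => line_hasDerivAt f hfd a d t
    have hftc : ∫ t in (0:ℝ)..1, φ' t = φ 1 - φ 0 :=
      intervalIntegral.integral_eq_sub_of_hasDerivAt hder
        (hcont.intervalIntegrable 0 1)
    have hbound : ∫ t in (0:ℝ)..1, φ' t ≤
        ∫ t in (0:ℝ)..1, (⟪gradient f a, d⟫ + Lf * ‖d‖ ^ 2 * t) := by
      refine intervalIntegral.integral_mono_on zero_le_one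
        (hcont.intervalIntegrable 0 1)
        ((by continuity : Continuous fun t : ℝ => ⟪gradient f a, d⟫ + Lf * ‖d‖ ^ 2 * t).intervalIntegrable 0 1)
        ?_
      intro t ht
      have ht0 : 0 ≤ t := ht.1
      have key : φ' t - ⟪gradient f a, d⟫ = ⟪gradient f (a + t • d) - gradient f a, d⟫ := by
        simp [hφ', inner_sub_left]
      have h2 : ⟪gradient f (a + t • d) - gradient f a, d⟫ ≤
          ‖gradient f (a + t • d) - gradient f a‖ * ‖d‖ := real_inner_le_norm _ _
      have h3 : ‖gradient f (a + t • d) - gradient f a‖ ≤ Lf * (t * ‖d‖) := by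
        have := hfL (a + t • d) a
        simpa [norm_smul, abs_of_nonneg ht0] using this
      have h4 : Lf * (t * ‖d‖) * ‖d‖ = Lf * ‖d‖ ^ 2 * t := by ring
      nlinarith [norm_nonneg d]
    have hrhs : ∫ t in (0:ℝ)..1, (⟪gradient f a, d⟫ + Lf * ‖d‖ ^ 2 * t) =
        ⟪gradient f a, d⟫ + Lf / 2 * ‖d‖ ^ 2 := by
      rw [intervalIntegral.integral_add (intervalIntegrable_const)
        ((intervalIntegral.intervalIntegrable_id (μ := MeasureTheory.volume) (a := 0) (b := 1)).const_mul _),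
        intervalIntegral.integral_const_mul, integral_id, intervalIntegral.integral_const]
      norm_num; ring
    have h0 : φ 0 = f a := by simp [hφ]
    have h1 : φ 1 = f b := by simp [hφ, hd]
    rw [h0, h1] at hftc
    linarith [hbound.trans_eq hrhs, hftc]

/-- Minimizing the composite model (3) decreases the Catalyst objective (2). -/
theorem composite_model_step {n : ℕ}
    (f g : EuclideanSpace ℝ (Fin n) → ℝ) (Lf L : ℝ) (hL : 0 ≤ L)
    (hf : ConvexOn ℝ Set.univ f) (hfd : Differentiable ℝ f)
    (hfL : ∀ x y, ‖gradient f x - gradient f y‖ ≤ Lf * ‖x - y‖)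
    (hg : ConvexOn ℝ Set.univ g)
    (xt xk xplus : EuclideanSpace ℝ (Fin n))
    (hmin : ∀ x,
      ⟪gradient f xt, xplus - xt⟫ + Lf / 2 * ‖xplus - xt‖ ^ 2 + g xplus +
          L / 2 * ‖xplus - xk‖ ^ 2 ≤
        ⟪gradient f xt, x - xt⟫ + Lf / 2 * ‖x - xt‖ ^ 2 + g x + L / 2 * ‖x - xk‖ ^ 2) :
    ∀ x, f xplus + g xplus + L / 2 * ‖xplus - xk‖ ^ 2 ≤
      f x + g x + L / 2 * ‖x - xk‖ ^ 2 + Lf / 2 * ‖x - xt‖ ^ 2 := by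
  intro x
  have hdesc := descent_lemma f hfd Lf hfL xt xplus
  have hlow := grad_lower f hf hfd xt x
  have hm := hmin x
  linarith
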